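/- Let (S, A, H, P, μ) be a finite episodic MDP, π⁺ a deterministic target policy, and ε > 0. Suppose L, U : S × A → ℝ satisfy L(s,a) ≤ μ(s,a) ≤ U(s,a) for every (s,a). Then for every step h ∈ {1,…,H}, every state s, and every action a, the contaminated reward of Algorithm 1, r^o_h(s) := L(s, π⁺_h(s)) − ε + (H − h) · min_{s',a'} L(s',a') − (H − h) · max_{s',a'} U(s',a'), satisfies r^o_h(s) ≤ Q^{π⁺}_h(s, π⁺_h(s)) − E_{s' ~ P(s,a)}[V^{π⁺}_{h+1}(s')] − ε, where Q^{π⁺}, V^{π⁺} are computed from the true rewards μ. -/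

import Mathlib

open scoped BigOperators

namespace RLAttack

variable {S A : Type*} [Fintype S] [Fintype A]

/-- Expectation of `f` under a `PMF` on a finite type. -/
noncomputable def expVal (p : PMF S) (f : S → ℝ) : ℝ :=
  ∑ s' : S, (p s').toReal * f s'

/-- Auxiliary backward-induction value: `n` steps remaining, current step `h`. -/
noncomputable def valAux (r : ℕ → S → A → ℝ) (P : ℕ → S → A → PMF S)
    (π : ℕ → S → A) : ℕ → ℕ → S → ℝ
  | 0, _, _ => 0
  | n + 1, h, s => r h s (π h s) + expVal (P h s (π h s)) (valAux r P π n (h + 1))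

/-- Value function `V^π_h(s)` for horizon `H`: `V^π_{H+1} = 0` and
`V^π_h(s) = r_h(s, π_h(s)) + E_{s' ~ P_h(s, π_h(s))}[V^π_{h+1}(s')]`. -/
noncomputable def V (H : ℕ) (r : ℕ → S → A → ℝ) (P : ℕ → S → A → PMF S)
    (π : ℕ → S → A) (h : ℕ) (s : S) : ℝ :=
  valAux r P π (H + 1 - h) h s

/-- Q-value function `Q^π_h(s,a) = r_h(s,a) + E_{s' ~ P_h(s,a)}[V^π_{h+1}(s')]`. -/
noncomputable def Q (H : ℕ) (r : ℕ → S → A → ℝ) (P : ℕ → S → A → PMF S)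
    (π : ℕ → S → A) (h : ℕ) (s : S) (a : A) : ℝ :=
  r h s a + expVal (P h s a) (fun s' => V H r P π (h + 1) s')



lemma sum_toReal_eq_one (p : PMF S) : ∑ s : S, (p s).toReal = 1 := by
  have h1 : (∑ s : S, p s) = 1 := by
    have h0 := p.tsum_coe; rwa [tsum_fintype] at h0
  have h2 : ∑ s : S, (p s).toReal = (∑ s : S, p s).toReal := by
    rw [ENNReal.toReal_sum (fun i _ => p.apply_ne_top i)]
  rw [h2, h1, ENNReal.toReal_one]

lemma expVal_le {p : PMF S} {f : S → ℝ} {c : ℝ} (hf : ∀ s, f s ≤ c) :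
    expVal p f ≤ c := by
  calc expVal p f ≤ ∑ s : S, (p s).toReal * c :=
        Finset.sum_le_sum fun s _ =>
          mul_le_mul_of_nonneg_left (hf s) ENNReal.toReal_nonneg
    _ = (∑ s : S, (p s).toReal) * c := by rw [Finset.sum_mul]
    _ = c := by rw [sum_toReal_eq_one, one_mul]

lemma le_expVal {p : PMF S} {f : S → ℝ} {c : ℝ} (hf : ∀ s, c ≤ f s) :
    c ≤ expVal p f := by
  calc c = (∑ s : S, (p s).toReal) * c := by rw [sum_toReal_eq_one, one_mul]
    _ = ∑ s : S, (p s).toReal * c := by rw [Finset.sum_mul]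
    _ ≤ expVal p f :=
        Finset.sum_le_sum fun s _ =>
          mul_le_mul_of_nonneg_left (hf s) ENNReal.toReal_nonneg

lemma valAux_bounds (r : ℕ → S → A → ℝ) (P : ℕ → S → A → PMF S)
    (π : ℕ → S → A) {m M : ℝ} (hm : ∀ h s a, m ≤ r h s a) (hM : ∀ h s a, r h s a ≤ M) :
    ∀ (n h : ℕ) (s : S), (n : ℝ) * m ≤ valAux r P π n h s ∧ valAux r P π n h s ≤ (n : ℝ) * M := by
  intro n
  induction n with
  | zero => intro h s; simp [valAux]
  | succ n ih =>
    intro h s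
    have h1 : ((n : ℝ)) * m ≤ expVal (P h s (π h s)) (valAux r P π n (h + 1)) :=
      le_expVal fun s' => (ih (h + 1) s').1
    have h2 : expVal (P h s (π h s)) (valAux r P π n (h + 1)) ≤ (n : ℝ) * M :=
      expVal_le fun s' => (ih (h + 1) s').2
    have hmr := hm h s (π h s)
    have hMr := hM h s (π h s)
    constructor <;> simp only [valAux, Nat.cast_succ] <;> nlinarith

/-- If `L ≤ μ ≤ U` pointwise, then the contaminated reward of
Algorithm 1, `r^o_h(s) = L(s,π⁺_h(s)) − ε + (H−h)·min L − (H−h)·max U`, is at most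
`Q^{π⁺}_h(s,π⁺_h(s)) − E_{s'~P(s,a)}[V^{π⁺}_{h+1}(s')] − ε` for every `h ∈ {1,…,H}`,
state `s` and action `a`. -/
theorem statement12 {S A : Type*} [Fintype S] [Fintype A] [Nonempty S] [Nonempty A]
    (H : ℕ) (hH : 1 ≤ H) (P : S → A → PMF S) (μ : S → A → ℝ)
    (πp : ℕ → S → A) (ε : ℝ) (hε : 0 < ε) (L U : S → A → ℝ)
    (hLU : ∀ s a, L s a ≤ μ s a ∧ μ s a ≤ U s a) :
    ∀ h ∈ Finset.Icc 1 H, ∀ s : S, ∀ a : A,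
      L s (πp h s) - ε
          + ((H - h : ℕ) : ℝ) *
            (Finset.univ : Finset (S × A)).inf' Finset.univ_nonempty
              (fun p => L p.1 p.2)
          - ((H - h : ℕ) : ℝ) *
            (Finset.univ : Finset (S × A)).sup' Finset.univ_nonempty
              (fun p => U p.1 p.2)
        ≤ Q H (fun _ s a => μ s a) (fun _ => P) πp h s (πp h s)
          - expVal (P s a)
              (fun s' => V H (fun _ s a => μ s a) (fun _ => P) πp (h + 1) s')
          - ε := by
  intro h hh s a
  rw [Finset.mem_Icc] at hh
  set m := (Finset.univ : Finset (S × A)).inf' Finset.univ_nonempty (fun p => L p.1 p.2)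
  set M := (Finset.univ : Finset (S × A)).sup' Finset.univ_nonempty (fun p => U p.1 p.2)
  have hm : ∀ (k : ℕ) (s : S) (a : A), m ≤ μ s a := fun _ s a =>
    le_trans (Finset.inf'_le (fun p : S × A => L p.1 p.2) (Finset.mem_univ (s, a))) (hLU s a).1
  have hM : ∀ (k : ℕ) (s : S) (a : A), μ s a ≤ M := fun _ s a =>
    le_trans (hLU s a).2 (Finset.le_sup' (fun p : S × A => U p.1 p.2) (Finset.mem_univ (s, a)))
  have hb := valAux_bounds (fun _ s a => μ s a) (fun _ => P) πp hm hM (H - h)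
  have hVeq : ∀ s' : S, V H (fun _ s a => μ s a) (fun _ => P) πp (h + 1) s'
      = valAux (fun _ s a => μ s a) (fun _ => P) πp (H - h) (h + 1) s' := by
    intro s'
    have : H + 1 - (h + 1) = H - h := by omega
    simp [V, this]
  have h1 : ((H - h : ℕ) : ℝ) * m
      ≤ expVal (P s (πp h s)) (fun s' => V H (fun _ s a => μ s a) (fun _ => P) πp (h + 1) s') := by
    apply le_expVal; intro s'; rw [hVeq s']; exact (hb (h + 1) s').1
  have h2 : expVal (P s a) (fun s' => V H (fun _ s a => μ s a) (fun _ => P) πp (h + 1) s')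
      ≤ ((H - h : ℕ) : ℝ) * M := by
    apply expVal_le; intro s'; rw [hVeq s']; exact (hb (h + 1) s').2
  have hL := (hLU s (πp h s)).1
  simp only [Q]
  linarith

end RLAttack
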